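/- Consider the recursive decomposition of a rooted tree S using components of the form S_{v,v'} := S_v \ S_{v'} (subtree at v minus subtree at a descendant v'). Case (ii) center rule: if v' is a node, let (u_0=v, u_1, ..., u_p=v') be the path from v to v', and let i be the least index with |S_{u_{i+1},v'}| ≤ (1/2)|S_{v,v'}|; take u_i as center. Then after removing u_i from S_{v,v'}, the component S_{v,u_i} satisfies |S_{v,u_i}| ≤ (1/2)|S_{v,v'}|, and every other resulting component is of the form S_c (a full subtree) for some child c of u_i. -/
import Mathlib


/- STATEMENT 18: Case (ii) center rule of the recursive decomposition.  `S` is a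
finite rooted tree given by the parent function `p` with root `r`; the subtree
`S_v` rooted at `v` is the descendant set `{x | ∃ k, p^[k] x = v}` and
`S_{v,v'} = S_v \ S_{v'}` for a descendant `v'` of `v`.  Let
`(u 0 = v, u 1, ..., u q = v')` be the path from `v` to `v'` (so
`u j = p^[q-j] v'`), and let `i` be the least index with
`|S_{u(i+1),v'}| ≤ (1/2)|S_{v,v'}|`; the center is `u i`.  Then after removing
`u i` from `S_{v,v'}`: the component `S_{v,u i}` satisfies
`|S_{v,u i}| ≤ (1/2)|S_{v,v'}|`, and every other vertex of `S_{v,v'}` lies in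
`S_{u(i+1),v'}` or in a full subtree `S_c` for some child `c ≠ u(i+1)` of
`u i`. -/
theorem stmt18 {V : Type*} [Fintype V] (p : V → V) (r : V)
    (hroot : p r = r) (hreach : ∀ x, ∃ k, p^[k] x = r)
    (v v' : V) (q : ℕ) (hq : 0 < q) (hdesc : p^[q] v' = v)
    (u : ℕ → V) (hu : ∀ j, u j = p^[q - j] v')
    (i : ℕ) (hi : i < q)
    (hleast : 2 * Nat.card (({x | ∃ k, p^[k] x = u (i + 1)} \ {x | ∃ k, p^[k] x = v'} : Set V)) ≤
        Nat.card (({x | ∃ k, p^[k] x = v} \ {x | ∃ k, p^[k] x = v'} : Set V)))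
    (hmin : ∀ j < i,
      ¬ (2 * Nat.card (({x | ∃ k, p^[k] x = u (j + 1)} \ {x | ∃ k, p^[k] x = v'} : Set V)) ≤
        Nat.card (({x | ∃ k, p^[k] x = v} \ {x | ∃ k, p^[k] x = v'} : Set V)))) :
    2 * Nat.card (({x | ∃ k, p^[k] x = v} \ {x | ∃ k, p^[k] x = u i} : Set V)) ≤
        Nat.card (({x | ∃ k, p^[k] x = v} \ {x | ∃ k, p^[k] x = v'} : Set V)) ∧
    ∀ x ∈ (({x | ∃ k, p^[k] x = v} \ {x | ∃ k, p^[k] x = v'} : Set V)), x ≠ u i →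
      x ∈ (({x | ∃ k, p^[k] x = v} \ {x | ∃ k, p^[k] x = u i} : Set V)) ∨
      x ∈ (({x | ∃ k, p^[k] x = u (i + 1)} \ {x | ∃ k, p^[k] x = v'} : Set V)) ∨
      ∃ c, p c = u i ∧ c ≠ u i ∧ c ≠ u (i + 1) ∧ ∃ k, p^[k] x = c := by
  classical
  -- basic facts about the path
  have hiter : ∀ a b (m : ℕ), p^[m] a = b →
      ∀ x, (∃ k, p^[k] x = a) → (∃ k, p^[k] x = b) := by
    rintro a b m hm x ⟨k, hk⟩
    exact ⟨m + k, by rw [Function.iterate_add_apply, hk, hm]⟩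
  have hu0 : u 0 = v := by rw [hu 0, Nat.sub_zero, hdesc]
  have hui : p^[q - i] v' = u i := (hu i).symm
  have huiv : p^[i] (u i) = v := by
    rw [← hui, ← Function.iterate_add_apply]
    rw [show i + (q - i) = q by omega, hdesc]
  -- inclusions of descendant sets
  have hsub1 : ∀ x, (∃ k, p^[k] x = v') → (∃ k, p^[k] x = u i) :=
    hiter v' (u i) (q - i) hui
  have hsub2 : ∀ x, (∃ k, p^[k] x = u i) → (∃ k, p^[k] x = v) :=
    hiter (u i) v i huiv
  -- cardinality split
  have hcard : Nat.card (({x | ∃ k, p^[k] x = v} \ {x | ∃ k, p^[k] x = u i} : Set V))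
      + Nat.card (({x | ∃ k, p^[k] x = u i} \ {x | ∃ k, p^[k] x = v'} : Set V))
      = Nat.card (({x | ∃ k, p^[k] x = v} \ {x | ∃ k, p^[k] x = v'} : Set V)) := by
    have hT : ({x | ∃ k, p^[k] x = v} \ {x | ∃ k, p^[k] x = v'} : Set V)
        = (({x | ∃ k, p^[k] x = v} \ {x | ∃ k, p^[k] x = u i} : Set V))
          ∪ (({x | ∃ k, p^[k] x = u i} \ {x | ∃ k, p^[k] x = v'} : Set V)) := by
      ext x
      simp only [Set.mem_diff, Set.mem_union, Set.mem_setOf_eq]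
      constructor
      · rintro ⟨hv, hv'⟩
        by_cases h : ∃ k, p^[k] x = u i
        · exact Or.inr ⟨h, hv'⟩
        · exact Or.inl ⟨hv, h⟩
      · rintro (⟨hv, hui'⟩ | ⟨hui', hv'⟩)
        · exact ⟨hv, fun h => hui' (hsub1 x h)⟩
        · exact ⟨hsub2 x hui', hv'⟩
    have hdisj : Disjoint (({x | ∃ k, p^[k] x = v} \ {x | ∃ k, p^[k] x = u i} : Set V))
        (({x | ∃ k, p^[k] x = u i} \ {x | ∃ k, p^[k] x = v'} : Set V)) := by
      rw [Set.disjoint_left]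
      rintro x ⟨_, h1⟩ ⟨h2, _⟩
      exact h1 h2
    rw [Nat.card_coe_set_eq, Nat.card_coe_set_eq, Nat.card_coe_set_eq, hT,
      Set.ncard_union_eq hdisj (Set.toFinite _) (Set.toFinite _)]
  constructor
  · rcases Nat.eq_zero_or_pos i with h0 | hpos
    · subst h0
      have : ({x | ∃ k, p^[k] x = v} \ {x | ∃ k, p^[k] x = u 0} : Set V) = ∅ := by
        rw [hu0, Set.diff_self]
      rw [this]
      simp
    · have hm := hmin (i - 1) (by omega)
      rw [show i - 1 + 1 = i by omega] at hm
      omega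
  · rintro x ⟨hxv, hxv'⟩ hxne
    simp only [Set.mem_setOf_eq] at hxv hxv'
    by_cases hxui : ∃ k, p^[k] x = u i
    · -- x is a proper descendant of u i
      have hk0 : Nat.find hxui ≠ 0 := by
        intro h
        have := Nat.find_spec hxui
        rw [h] at this
        exact hxne this
      set k0 := Nat.find hxui with hk0def
      set c := p^[k0 - 1] x with hc
      have hpc : p c = u i := by
        have h1 : p (p^[k0 - 1] x) = p^[k0 - 1 + 1] x :=
          (Function.iterate_succ_apply' p (k0 - 1) x).symm
        rw [hc, h1, show k0 - 1 + 1 = k0 by omega]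
        exact Nat.find_spec hxui
      have hcne : c ≠ u i := by
        intro h
        exact absurd h (Nat.find_min hxui (show k0 - 1 < k0 by omega))
      by_cases hc1 : c = u (i + 1)
      · right; left
        refine ⟨⟨k0 - 1, by rw [← hc1]⟩, hxv'⟩
      · right; right
        exact ⟨c, hpc, hcne, hc1, k0 - 1, rfl⟩
    · left
      exact ⟨hxv, hxui⟩
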